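/- If Q1 and Q2 are both maximizers of H_Q(T|X,Y) over the convex polytope Δ_P, then Q1(t|x,y) = Q2(t|x,y) for all (t,x,y) such that both Q1(x,y) > 0 and Q2(x,y) > 0. -/

import Mathlib

open scoped BigOperators
noncomputable section

variable {T X Y : Type*}


lemma logsum2 {q1 q2 m1 m2 : ℝ} (hq1 : 0 ≤ q1) (hq2 : 0 ≤ q2)
    (h1 : q1 ≤ m1) (h2 : q2 ≤ m2) :
    (q1 + q2) * Real.log ((q1 + q2) / (m1 + m2)) ≤
      q1 * Real.log (q1 / m1) + q2 * Real.log (q2 / m2) := by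
  rcases eq_or_lt_of_le (hq1.trans h1) with hm1 | hm1
  · have hq1' : q1 = 0 := le_antisymm (h1.trans hm1.ge) hq1
    simp [hq1', ← hm1]
  rcases eq_or_lt_of_le (hq2.trans h2) with hm2 | hm2
  · have hq2' : q2 = 0 := le_antisymm (h2.trans hm2.ge) hq2
    simp [hq2', ← hm2]
  have hs : (0:ℝ) < m1 + m2 := by linarith
  have key := Real.convexOn_mul_log.2 (Set.mem_Ici.2 (div_nonneg hq1 hm1.le))
    (Set.mem_Ici.2 (div_nonneg hq2 hm2.le))
    (le_of_lt (div_pos hm1 hs)) (le_of_lt (div_pos hm2 hs))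
    (by field_simp)
  simp only [smul_eq_mul] at key
  have hcomb : m1 / (m1 + m2) * (q1 / m1) + m2 / (m1 + m2) * (q2 / m2)
      = (q1 + q2) / (m1 + m2) := by field_simp
  rw [hcomb] at key
  have hmul := mul_le_mul_of_nonneg_left key hs.le
  have e1 : (m1+m2) * (((q1+q2)/(m1+m2)) * Real.log ((q1+q2)/(m1+m2)))
      = (q1+q2) * Real.log ((q1+q2)/(m1+m2)) := by field_simp
  have e2 : (m1+m2) * (m1/(m1+m2) * (q1/m1 * Real.log (q1/m1))
      + m2/(m1+m2) * (q2/m2 * Real.log (q2/m2)))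
      = q1 * Real.log (q1/m1) + q2 * Real.log (q2/m2) := by field_simp
  linarith [hmul, e1, e2]

lemma logsum2_eq {q1 q2 m1 m2 : ℝ} (hq1 : 0 ≤ q1) (hq2 : 0 ≤ q2)
    (h1 : q1 ≤ m1) (h2 : q2 ≤ m2) (hm1 : 0 < m1) (hm2 : 0 < m2)
    (heq : (q1 + q2) * Real.log ((q1 + q2) / (m1 + m2)) =
      q1 * Real.log (q1 / m1) + q2 * Real.log (q2 / m2)) :
    q1 / m1 = q2 / m2 := by
  by_contra hne
  have hs : (0:ℝ) < m1 + m2 := by linarith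
  have key := Real.strictConvexOn_mul_log.2 (Set.mem_Ici.2 (div_nonneg hq1 hm1.le))
    (Set.mem_Ici.2 (div_nonneg hq2 hm2.le)) hne
    (div_pos hm1 hs) (div_pos hm2 hs) (by field_simp)
  simp only [smul_eq_mul] at key
  have hcomb : m1 / (m1 + m2) * (q1 / m1) + m2 / (m1 + m2) * (q2 / m2)
      = (q1 + q2) / (m1 + m2) := by field_simp
  rw [hcomb] at key
  have hmul := mul_lt_mul_of_pos_left key hs
  have e1 : (m1+m2) * (((q1+q2)/(m1+m2)) * Real.log ((q1+q2)/(m1+m2)))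
      = (q1+q2) * Real.log ((q1+q2)/(m1+m2)) := by field_simp
  have e2 : (m1+m2) * (m1/(m1+m2) * (q1/m1 * Real.log (q1/m1))
      + m2/(m1+m2) * (q2/m2 * Real.log (q2/m2)))
      = q1 * Real.log (q1/m1) + q2 * Real.log (q2/m2) := by field_simp
  linarith [hmul, e1, e2]

/-- A joint probability distribution of `(T,X,Y)`, as a function `T → X → Y → ℝ`. -/
def IsDist [Fintype T] [Fintype X] [Fintype Y] (P : T → X → Y → ℝ) : Prop :=
  (∀ t x y, 0 ≤ P t x y) ∧ ∑ t, ∑ x, ∑ y, P t x y = 1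

/-- The `(T,X)`-marginal. -/
def margTX [Fintype Y] (P : T → X → Y → ℝ) (t : T) (x : X) : ℝ := ∑ y, P t x y

/-- The `(T,Y)`-marginal. -/
def margTY [Fintype X] (P : T → X → Y → ℝ) (t : T) (y : Y) : ℝ := ∑ x, P t x y

/-- The `(X,Y)`-marginal. -/
def margXY [Fintype T] (P : T → X → Y → ℝ) (x : X) (y : Y) : ℝ := ∑ t, P t x y

/-- The `T`-marginal. -/
def margT [Fintype X] [Fintype Y] (P : T → X → Y → ℝ) (t : T) : ℝ := ∑ x, ∑ y, P t x y

/-- The `Y`-marginal. -/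
def margY [Fintype T] [Fintype X] (P : T → X → Y → ℝ) (y : Y) : ℝ := ∑ t, ∑ x, P t x y

section Aux

variable {T X Y : Type*}

lemma sum_flatten [Fintype T] [Fintype X] [Fintype Y] (R : T → X → Y → ℝ) :
    (∑ t, ∑ x, ∑ y, R t x y) = ∑ p : T × X × Y, R p.1 p.2.1 p.2.2 := by
  rw [Fintype.sum_prod_type]
  congr 1; ext t
  rw [Fintype.sum_prod_type]

lemma le_margXY [Fintype T] [Fintype X] [Fintype Y] {Q : T → X → Y → ℝ}
    (hnn : ∀ t x y, 0 ≤ Q t x y) (t : T) (x : X) (y : Y) :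
    Q t x y ≤ margXY Q x y :=
  Finset.single_le_sum (fun t' _ => hnn t' x y) (Finset.mem_univ t)

end Aux

/-- `Δ_P`: the polytope of joint distributions with the same `(T,X)`- and
`(T,Y)`-marginals as `P`. -/
def deltaP [Fintype T] [Fintype X] [Fintype Y] (P : T → X → Y → ℝ) :
    Set (T → X → Y → ℝ) :=
  {Q | IsDist Q ∧ (∀ t x, margTX Q t x = margTX P t x) ∧
    (∀ t y, margTY Q t y = margTY P t y)}

/-- The conditional entropy `H_Q(T|X,Y)` (with the convention `0 log 0 = 0`,
automatic since `Real.log 0 = 0`). -/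
def condEntTXY [Fintype T] [Fintype X] [Fintype Y] (Q : T → X → Y → ℝ) : ℝ :=
  ∑ t, ∑ x, ∑ y, -(Q t x y * Real.log (Q t x y / margXY Q x y))

/-- The conditional mutual information `I_Q(T:X|Y)`. -/
def CMI [Fintype T] [Fintype X] [Fintype Y] (Q : T → X → Y → ℝ) : ℝ :=
  ∑ t, ∑ x, ∑ y,
    Q t x y * Real.log (Q t x y * margY Q y / (margTY Q t y * margXY Q x y))

/-- If `Q1` and `Q2` are both maximizers of `H_Q(T|X,Y)` over `Δ_P`, then their
conditional distributions agree: `Q1(t|x,y) = Q2(t|x,y)` wherever both `(X,Y)`-marginals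
are positive. -/
theorem maximizers_same_conditional [Fintype T] [Fintype X] [Fintype Y]
    (P Q1 Q2 : T → X → Y → ℝ) (hP : IsDist P)
    (hQ1 : Q1 ∈ deltaP P) (hQ2 : Q2 ∈ deltaP P)
    (hmax1 : ∀ Q ∈ deltaP P, condEntTXY Q ≤ condEntTXY Q1)
    (hmax2 : ∀ Q ∈ deltaP P, condEntTXY Q ≤ condEntTXY Q2) :
    ∀ t x y, 0 < margXY Q1 x y → 0 < margXY Q2 x y →
      Q1 t x y / margXY Q1 x y = Q2 t x y / margXY Q2 x y := by
  classical
  obtain ⟨⟨h1nn, h1sum⟩, h1TX, h1TY⟩ := hQ1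
  obtain ⟨⟨h2nn, h2sum⟩, h2TX, h2TY⟩ := hQ2
  set Qm : T → X → Y → ℝ := fun t x y => (Q1 t x y + Q2 t x y) / 2 with hQmdef
  have hmXY : ∀ x y, margXY Qm x y = (margXY Q1 x y + margXY Q2 x y) / 2 := by
    intro x y
    simp only [margXY, hQmdef]
    rw [← Finset.sum_add_distrib, Finset.sum_div]
  have hQmD : Qm ∈ deltaP P := by
    refine ⟨⟨fun t x y => by
      have := h1nn t x y; have := h2nn t x y; simp only [hQmdef]; linarith, ?_⟩, ?_, ?_⟩
    · have : (∑ t, ∑ x, ∑ y, Qm t x y) = ((∑ t, ∑ x, ∑ y, Q1 t x y) + ∑ t, ∑ x, ∑ y, Q2 t x y) / 2 := by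
        rw [sum_flatten Qm, sum_flatten Q1, sum_flatten Q2,
          ← Finset.sum_add_distrib, Finset.sum_div]
      rw [this, h1sum, h2sum]; norm_num
    · intro t x
      have : margTX Qm t x = (margTX Q1 t x + margTX Q2 t x) / 2 := by
        simp only [margTX, hQmdef]
        rw [← Finset.sum_add_distrib, Finset.sum_div]
      rw [this, h1TX, h2TX]; ring
    · intro t y
      have : margTY Qm t y = (margTY Q1 t y + margTY Q2 t y) / 2 := by
        simp only [margTY, hQmdef]
        rw [← Finset.sum_add_distrib, Finset.sum_div]
      rw [this, h1TY, h2TY]; ring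
  -- pointwise terms
  set F : (T → X → Y → ℝ) → (T × X × Y) → ℝ :=
    fun Q p => -(Q p.1 p.2.1 p.2.2 * Real.log (Q p.1 p.2.1 p.2.2 / margXY Q p.2.1 p.2.2)) with hFdef
  have hCE : ∀ Q : T → X → Y → ℝ, condEntTXY Q = ∑ p : T × X × Y, F Q p := by
    intro Q
    rw [condEntTXY, sum_flatten (fun t x y => -(Q t x y * Real.log (Q t x y / margXY Q x y)))]
  have hdivhalf : ∀ a b : ℝ, (a / 2) / (b / 2) = a / b := by
    intro a b; rw [div_div_div_comm]; norm_num
  have hpt : ∀ p : T × X × Y, (F Q1 p + F Q2 p) / 2 ≤ F Qm p := by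
    rintro ⟨t, x, y⟩
    have hkey := logsum2 (h1nn t x y) (h2nn t x y)
      (le_margXY h1nn t x y) (le_margXY h2nn t x y)
    simp only [hFdef]
    rw [hmXY]
    simp only [hQmdef, hdivhalf]
    linarith
  have hc12 : condEntTXY Q1 = condEntTXY Q2 :=
    le_antisymm (hmax2 Q1 ⟨⟨h1nn, h1sum⟩, h1TX, h1TY⟩) (hmax1 Q2 ⟨⟨h2nn, h2sum⟩, h2TX, h2TY⟩)
  have hub : condEntTXY Qm ≤ condEntTXY Q1 := hmax1 Qm hQmD
  have hsum_eq : (∑ p : T × X × Y, (F Q1 p + F Q2 p) / 2) = ∑ p : T × X × Y, F Qm p := by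
    refine le_antisymm (Finset.sum_le_sum fun p _ => hpt p) ?_
    have : (∑ p : T × X × Y, (F Q1 p + F Q2 p) / 2)
        = (condEntTXY Q1 + condEntTXY Q2) / 2 := by
      rw [hCE Q1, hCE Q2, ← Finset.sum_add_distrib, Finset.sum_div]
    rw [this, ← hCE Qm, ← hc12]
    linarith
  have hpteq := (Finset.sum_eq_sum_iff_of_le (fun p _ => hpt p)).1 hsum_eq
  intro t x y hm1 hm2
  have heq := hpteq (t, x, y) (Finset.mem_univ _)
  simp only [hFdef] at heq
  rw [hmXY] at heq
  simp only [hQmdef, hdivhalf] at heq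
  refine logsum2_eq (h1nn t x y) (h2nn t x y)
    (le_margXY h1nn t x y) (le_margXY h2nn t x y) hm1 hm2 ?_
  linarith
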